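/- There exist a constant C > 0 depending only on c₂, c₃ and a threshold D₀ ∈ ℕ such that the following holds. Let m ≥ D ≥ D₀ with m (log m)² ≤ D², let w_1, …, w_m ∈ ℝ^D be unit vectors satisfying (A2) with constant c₂ and (A3) with constant c₃, and let ŵ_1, …, ŵ_m ∈ ℝ^D be unit vectors with δ_max := max_{k∈[m]} min_{s∈{−1,1}} ‖s ŵ_k − w_k‖₂ ≤ D^{1/2}/(C m √(log m)); for each k let s_k ∈ {−1,1} attain this minimum. Then for n ∈ {2,3}, the matrices G̃_n with entries (G̃_n)_{ℓk} = ⟨ŵ_ℓ, s_k w_k⟩^n and Ĝ_n with entries (Ĝ_n)_{ℓk} = ⟨ŵ_ℓ, ŵ_k⟩^n satisfy ‖G̃_n − Ĝ_n‖ ≤ C m (log(m)/D)^{(2n−1)/4} δ_max in operator norm. -/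

import Mathlib

open scoped BigOperators

noncomputable def opNorm {n : Type*} [Fintype n] [DecidableEq n] (A : Matrix n n ℝ) : ℝ :=
  ‖Matrix.toEuclideanCLM (𝕜 := ℝ) A‖

noncomputable def l2norm {d : ℕ} (v : Fin d → ℝ) : ℝ := Real.sqrt (∑ i, (v i) ^ 2)

def dot {d : ℕ} (v w : Fin d → ℝ) : ℝ := ∑ i, v i * w i

noncomputable def gram {D m : ℕ} (w : Fin m → Fin D → ℝ) (n : ℕ) :
    Matrix (Fin m) (Fin m) ℝ := Matrix.of fun k l => (dot (w k) (w l)) ^ n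

lemma opNorm_le_of_sq {ι : Type*} [Fintype ι] [DecidableEq ι] (A : Matrix ι ι ℝ) (c : ℝ)
    (hc : 0 ≤ c) (h : ∀ x : ι → ℝ, ∑ i, (A.mulVec x i) ^ 2 ≤ c ^ 2 * ∑ i, (x i) ^ 2) :
    opNorm A ≤ c := by
  refine ContinuousLinearMap.opNorm_le_bound _ hc ?_
  intro x
  have h1 : ((Matrix.toEuclideanCLM (𝕜 := ℝ) A) x : EuclideanSpace ℝ ι) =
      (WithLp.equiv 2 (ι → ℝ)).symm (A.mulVec ((WithLp.equiv 2 (ι → ℝ)) x)) := rfl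
  rw [h1, EuclideanSpace.norm_eq, EuclideanSpace.norm_eq]
  simp only [WithLp.equiv_symm_apply, PiLp.toLp_apply, Real.norm_eq_abs, sq_abs]
  have h2 := h ((WithLp.equiv 2 (ι → ℝ)) x)
  calc Real.sqrt (∑ i, (A.mulVec ((WithLp.equiv 2 (ι → ℝ)) x) i) ^ 2)
      ≤ Real.sqrt (c ^ 2 * ∑ i, (((WithLp.equiv 2 (ι → ℝ)) x) i) ^ 2) := Real.sqrt_le_sqrt h2
    _ = c * Real.sqrt (∑ i, (((WithLp.equiv 2 (ι → ℝ)) x) i) ^ 2) := by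
        rw [Real.sqrt_mul (sq_nonneg c), Real.sqrt_sq hc]
    _ = c * Real.sqrt (∑ i, (x i) ^ 2) := by rfl

lemma opNorm_le_frobenius {ι : Type*} [Fintype ι] [DecidableEq ι] (A : Matrix ι ι ℝ) :
    opNorm A ≤ Real.sqrt (∑ i, ∑ j, (A i j) ^ 2) := by
  refine opNorm_le_of_sq A _ (Real.sqrt_nonneg _) ?_
  intro x
  rw [Real.sq_sqrt (by positivity)]
  rw [Finset.sum_mul]
  refine Finset.sum_le_sum ?_
  intro i _
  calc (A.mulVec x i) ^ 2 = (∑ j, A i j * x j) ^ 2 := by rfl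
    _ ≤ (∑ j, (A i j) ^ 2) * ∑ j, (x j) ^ 2 := Finset.sum_mul_sq_le_sq_mul_sq _ _ _

lemma opNorm_diagonal_le {ι : Type*} [Fintype ι] [DecidableEq ι] (d : ι → ℝ) (c : ℝ)
    (hc : 0 ≤ c) (h : ∀ i, |d i| ≤ c) : opNorm (Matrix.diagonal d) ≤ c := by
  refine opNorm_le_of_sq _ _ hc ?_
  intro x
  rw [Finset.mul_sum]
  refine Finset.sum_le_sum ?_
  intro i _
  rw [Matrix.mulVec_diagonal]
  have h2 : (d i)^2 ≤ c^2 := by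
    have := h i; nlinarith [abs_nonneg (d i), sq_abs (d i)]
  nlinarith [sq_nonneg (x i), sq_nonneg (d i * x i)]

lemma abs_dot_le {d : ℕ} (v u : Fin d → ℝ) :
    |dot v u| ≤ Real.sqrt (∑ i, (v i) ^ 2) * Real.sqrt (∑ i, (u i) ^ 2) := by
  rw [← Real.sqrt_sq_eq_abs, ← Real.sqrt_mul (by positivity)]
  exact Real.sqrt_le_sqrt (Finset.sum_mul_sq_le_sq_mul_sq _ _ _)

lemma aux_sq_le {t M : ℝ} (h : |t| ≤ M) : t^2 ≤ M^2 := by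
  nlinarith [sq_abs t, abs_nonneg t]

lemma aux_step1 (u v b : ℝ) : u * v * b ≤ |b| * (u^2/2) + |b| * (v^2/2) := by
  have h := le_abs_self (u*v*b)
  have h2 : |u*v*b| = |b| * (|u| * |v|) := by rw [abs_mul, abs_mul]; ring
  nlinarith [sq_nonneg (|u|-|v|), sq_abs u, sq_abs v, abs_nonneg b, abs_nonneg u, abs_nonneg v]

lemma aux_diag2 {t d dm : ℝ} (h1 : |t| ≤ 1) (h2 : t = 1 - d/2) (h3 : d ≤ dm) (h0 : 0 ≤ d) :
    |t^2 - 1| ≤ 3/2 * dm := by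
  have h1' := abs_le.mp h1
  rw [abs_le]; constructor <;> nlinarith [h1'.1, h1'.2]

lemma aux_diag3 {t d dm : ℝ} (h1 : |t| ≤ 1) (h2 : t = 1 - d/2) (h3 : d ≤ dm) (h0 : 0 ≤ d) :
    |t^3 - 1| ≤ 3/2 * dm := by
  have h1' := abs_le.mp h1
  rw [abs_le]; constructor <;> nlinarith [h1'.1, h1'.2, sq_nonneg t, sq_nonneg (t+1), sq_nonneg (t-1)]

lemma aux_absmul {A B M : ℝ} (hA : |A| ≤ M) (hB : |B| ≤ M) : |A*B| ≤ M^2 := by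
  rw [abs_mul, sq]
  exact mul_le_mul hA hB (abs_nonneg B) ((abs_nonneg A).trans hA)

lemma aux_pow2 {A B M : ℝ} (hA : |A| ≤ M) (hB : |B| ≤ M) :
    (A^2-B^2)^2 ≤ (3*M^1)^2 * (A-B)^2 := by
  have hA2 := aux_sq_le hA
  have hB2 := aux_sq_le hB
  have h := abs_le.mp (aux_absmul hA hB)
  have e2 : (A+B)^2 ≤ 9*M^2 := by nlinarith [h.1, h.2]
  nlinarith [mul_le_mul_of_nonneg_left e2 (sq_nonneg (A-B))]

lemma aux_pow3 {A B M : ℝ} (hA : |A| ≤ M) (hB : |B| ≤ M) :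
    (A^3-B^3)^2 ≤ (3*M^2)^2 * (A-B)^2 := by
  have hA2 := aux_sq_le hA
  have hB2 := aux_sq_le hB
  have h := abs_le.mp (aux_absmul hA hB)
  have hX1 : A^2+A*B+B^2 ≤ 3*M^2 := by nlinarith [h.2]
  have hX2 : -(3*M^2) ≤ A^2+A*B+B^2 := by nlinarith [h.1, sq_nonneg A, sq_nonneg B]
  have e2 : (A^2+A*B+B^2)^2 ≤ (3*M^2)^2 := by
    nlinarith [mul_nonneg (sub_nonneg.mpr hX1)
      (show (0:ℝ) ≤ A^2+A*B+B^2 + 3*M^2 by linarith)]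
  nlinarith [mul_le_mul_of_nonneg_left e2 (sq_nonneg (A-B))]

lemma aux_ge {Cc u v x : ℝ} (hC : 1 ≤ Cc) (hu : 1 ≤ u) (hv : 1 ≤ v) (hx : 0 ≤ x) :
    x ≤ Cc * x * u * v := by
  have h1 : x ≤ Cc*x := by nlinarith [mul_nonneg hx (sub_nonneg.mpr hC)]
  have h2 : Cc*x ≤ Cc*x*u := by
    nlinarith [mul_nonneg (mul_nonneg (by linarith : (0:ℝ) ≤ Cc) hx) (sub_nonneg.mpr hu)]
  have h3 : Cc*x*u ≤ Cc*x*u*v := by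
    nlinarith [mul_nonneg (mul_nonneg (mul_nonneg (by linarith : (0:ℝ) ≤ Cc) hx)
      (by linarith : (0:ℝ) ≤ u)) (sub_nonneg.mpr hv)]
  linarith

lemma aux_coef2 {K : ℝ} (hK : 1 ≤ K) : 9*K^4*(K+1) ≤ 9*K^4*(K+1)^2 := by
  have a2 : (K+1) ≤ (K+1)^2 := by nlinarith
  have h1 : (0:ℝ) ≤ K^4 := by positivity
  nlinarith [mul_le_mul_of_nonneg_left a2 h1]

lemma aux_coef1 {K : ℝ} (hK : 1 ≤ K) : 9*K^2*(K+1) ≤ 9*K^4*(K+1)^2 := by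
  have a1 : K^2 ≤ K^4 := by nlinarith [sq_nonneg K, sq_nonneg (K^2-1), sq_nonneg (K-1)]
  have h0 : (0:ℝ) ≤ K+1 := by linarith
  calc 9*K^2*(K+1) ≤ 9*K^4*(K+1) := by nlinarith [mul_le_mul_of_nonneg_right a1 h0]
    _ ≤ 9*K^4*(K+1)^2 := aux_coef2 hK

set_option maxHeartbeats 4000000 in
/-- For `n ∈ {2,3}`, the mixed Gram matrix `G̃_n` and the Gram matrix `Ĝ_n` of the approximated
weights satisfy `‖G̃_n − Ĝ_n‖ ≤ C m (log(m)/D)^{(2n−1)/4} δ_max`. -/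
theorem mixed_gram_perturbation
    (c₂ c₃ : ℝ) (hc₂ : 0 < c₂) (hc₃ : 0 < c₃) :
    ∃ C : ℝ, 0 < C ∧ ∃ D₀ : ℕ,
      ∀ (D m : ℕ), D₀ ≤ D → D ≤ m → (m : ℝ) * (Real.log m) ^ 2 ≤ (D : ℝ) ^ 2 →
      ∀ (w wh : Fin m → Fin D → ℝ) (s : Fin m → ℝ) (δmax : ℝ),
        (∀ k, ∑ i, (w k i) ^ 2 = 1) →
        (∀ k, ∑ i, (wh k i) ^ 2 = 1) →
        (∀ k l, k ≠ l → (dot (w k) (w l)) ^ 2 ≤ c₂ * Real.log m / D) →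
        (∀ n : ℕ, 2 ≤ n → IsUnit (gram w n) ∧ opNorm (gram w n)⁻¹ ≤ c₃) →
        (∀ k, s k = 1 ∨ s k = -1) →
        (∀ k, l2norm (s k • wh k - w k) = min (l2norm (wh k - w k)) (l2norm (wh k + w k))) →
        (∀ k, min (l2norm (wh k - w k)) (l2norm (wh k + w k)) ≤ δmax) →
        δmax ≤ Real.sqrt D / (C * m * Real.sqrt (Real.log m)) →
        ∀ n : ℕ, n = 2 ∨ n = 3 →
          opNorm ((Matrix.of fun l k => (dot (wh l) (s k • w k)) ^ n) -
              Matrix.of fun l k => (dot (wh l) (wh k)) ^ n) ≤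
            C * m * (Real.log m / D) ^ ((2 * (n : ℝ) - 1) / 4) * δmax := by
  obtain ⟨K, hKdef, hK1⟩ : ∃ K : ℝ, K = Real.sqrt c₂ + 3 ∧ 1 ≤ K :=
    ⟨_, rfl, by nlinarith [Real.sqrt_nonneg c₂]⟩
  set C : ℝ := 3 * K ^ 2 * (K + 1) + 3 / 2 with hCdef
  have hK2 : 1 ≤ K^2 := by nlinarith
  have hC1 : 1 ≤ C := by rw [hCdef]; nlinarith
  refine ⟨C, by linarith, 3, ?_⟩
  intro D m hD0 hDm hmD w wh s δmax hw hwh hA2 _hA3 hs hmin hδbound hδsmall n hn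
  -- basic numeric facts
  have hD3 : (3:ℝ) ≤ (D:ℝ) := by exact_mod_cast hD0
  have hDpos : (0:ℝ) < D := by linarith
  have hmD' : (D:ℝ) ≤ (m:ℝ) := by exact_mod_cast hDm
  have hm3 : (3:ℝ) ≤ (m:ℝ) := le_trans hD3 hmD'
  have hmpos : (0:ℝ) < m := by linarith
  set Lm := Real.log (m:ℝ) with hLmdef
  have hLm1 : 1 ≤ Lm := by
    rw [hLmdef, Real.le_log_iff_exp_le hmpos]
    have h9 := Real.exp_one_lt_d9
    linarith
  have hLmD : Lm ≤ (D:ℝ) := by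
    have h1 : (D:ℝ) * Lm^2 ≤ (m:ℝ) * Lm^2 := by nlinarith [sq_nonneg Lm]
    have h2 : (D:ℝ) * Lm ≤ (D:ℝ) * Lm^2 := by
      nlinarith [mul_nonneg hDpos.le (mul_nonneg (by linarith : (0:ℝ) ≤ Lm) (by linarith : (0:ℝ) ≤ Lm - 1))]
    nlinarith
  set L := Lm / (D:ℝ) with hLdef
  have hLpos : 0 < L := div_pos (by linarith) hDpos
  have hL1 : L ≤ 1 := (div_le_one hDpos).mpr hLmD
  have hsL1 : Real.sqrt L ≤ 1 := by
    rw [show (1:ℝ) = Real.sqrt 1 by simp]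
    exact Real.sqrt_le_sqrt hL1
  have hsL0 : 0 < Real.sqrt L := Real.sqrt_pos.mpr hLpos
  have hLsL : L ≤ Real.sqrt L := by
    nlinarith [Real.sq_sqrt hLpos.le, Real.sqrt_nonneg L, sq_nonneg (Real.sqrt L - 1)]
  have hmL : 1 ≤ (m:ℝ) * L := by
    rw [hLdef, mul_div_assoc']
    rw [le_div_iff₀ hDpos]
    nlinarith
  have hmsL : 1 ≤ (m:ℝ) * Real.sqrt L :=
    le_trans hmL (mul_le_mul_of_nonneg_left hLsL hmpos.le)
  -- δ facts
  set δ : Fin m → ℝ := fun k => l2norm (s k • wh k - w k) with hδdef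
  have hδle : ∀ k, δ k ≤ δmax := by
    intro k
    have h : δ k = min (l2norm (wh k - w k)) (l2norm (wh k + w k)) := by
      simp only [hδdef]; exact hmin k
    rw [h]; exact hδbound k
  have hδnn : ∀ k, 0 ≤ δ k := fun k => Real.sqrt_nonneg _
  have hm0 : 0 < m := by omega
  have hδmax0 : 0 ≤ δmax := le_trans (hδnn ⟨0, hm0⟩) (hδle ⟨0, hm0⟩)
  have hs2 : ∀ k, s k * s k = 1 := fun k => by rcases hs k with h | h <;> rw [h] <;> norm_num
  have hsabs : ∀ k, |s k| = 1 := fun k => by rcases hs k with h | h <;> rw [h] <;> norm_num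
  have hδsq : ∀ k, (δ k)^2 = ∑ i, (s k * wh k i - w k i)^2 := by
    intro k
    have h0 : (0:ℝ) ≤ ∑ i, ((s k • wh k - w k) i)^2 := Finset.sum_nonneg fun i _ => sq_nonneg _
    have h1 : (δ k)^2 = ∑ i, ((s k • wh k - w k) i)^2 := by
      simp only [hδdef, l2norm]; exact Real.sq_sqrt h0
    rw [h1]
    exact Finset.sum_congr rfl fun i _ => by simp [Pi.sub_apply, Pi.smul_apply, smul_eq_mul]
  -- unit norms
  have hswsq : ∀ k, ∑ i, ((s k • w k) i)^2 = 1 := by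
    intro k
    have h1 : ∀ i ∈ Finset.univ, ((s k • w k) i)^2 = (s k * s k) * (w k i)^2 := by
      intro i _; simp [Pi.smul_apply, smul_eq_mul]; ring
    rw [Finset.sum_congr rfl h1, ← Finset.mul_sum, hs2 k, hw k, one_mul]
  have hbll : ∀ l, dot (wh l) (wh l) = 1 := by
    intro l
    unfold dot
    rw [show ∑ i, wh l i * wh l i = ∑ i, (wh l i)^2 from
      Finset.sum_congr rfl (fun i _ => (pow_two (wh l i)).symm), hwh l]
  have habs_a : ∀ l k, |dot (wh l) (s k • w k)| ≤ 1 := by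
    intro l k
    have h := abs_dot_le (wh l) (s k • w k)
    rw [hwh l, hswsq k] at h
    simpa using h
  -- δmax ≤ √L
  have hδL : δmax ≤ Real.sqrt L := by
    refine le_trans hδsmall ?_
    have hden : 0 < C * (m:ℝ) * Real.sqrt Lm := by
      have : 0 < Real.sqrt Lm := Real.sqrt_pos.mpr (by linarith)
      positivity
    rw [hLdef, Real.sqrt_div (by linarith : (0:ℝ) ≤ Lm)]
    rw [div_le_div_iff₀ hden (Real.sqrt_pos.mpr hDpos)]
    rw [Real.mul_self_sqrt hDpos.le]
    have h1 : Real.sqrt Lm * (C * (m:ℝ) * Real.sqrt Lm) = C * (m:ℝ) * Lm := by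
      rw [show Real.sqrt Lm * (C * (m:ℝ) * Real.sqrt Lm)
          = C * (m:ℝ) * (Real.sqrt Lm * Real.sqrt Lm) by ring, Real.mul_self_sqrt (by linarith)]
    rw [h1]
    nlinarith [mul_le_mul_of_nonneg_left hLm1 (mul_nonneg (by linarith : (0:ℝ) ≤ C) hmpos.le),
      mul_le_mul_of_nonneg_right hC1 hmpos.le]
  -- incoherence in terms of L
  have hww : ∀ l k, l ≠ k → |dot (w l) (w k)| ≤ Real.sqrt c₂ * Real.sqrt L := by
    intro l k hlk
    have h2 := hA2 l k hlk
    rw [← Real.sqrt_sq_eq_abs, ← Real.sqrt_mul hc₂.le]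
    apply Real.sqrt_le_sqrt
    calc (dot (w l) (w k))^2 ≤ c₂ * Lm / ↑D := h2
      _ = c₂ * L := by rw [hLdef, mul_div_assoc]
  have hδvec : ∀ k, Real.sqrt (∑ i, (s k * wh k i - w k i)^2) = δ k := by
    intro k; rw [← hδsq k, Real.sqrt_sq (hδnn k)]
  have hdotΔ : ∀ k (x : Fin D → ℝ), (∑ i, (x i)^2 = 1) →
      |dot (fun i => s k * wh k i - w k i) x| ≤ δ k := by
    intro k x hx
    calc |dot (fun i => s k * wh k i - w k i) x|
        ≤ Real.sqrt (∑ i, ((fun i => s k * wh k i - w k i) i)^2) * Real.sqrt (∑ i, (x i)^2) :=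
          abs_dot_le _ _
      _ = δ k := by
          rw [hx, Real.sqrt_one, mul_one,
            show (∑ i, ((fun i => s k * wh k i - w k i) i)^2)
              = ∑ i, (s k * wh k i - w k i)^2 from rfl, hδvec k]
  have hdotΔ' : ∀ k (x : Fin D → ℝ), (∑ i, (x i)^2 = 1) →
      |dot x (fun i => s k * wh k i - w k i)| ≤ δ k := by
    intro k x hx
    calc |dot x (fun i => s k * wh k i - w k i)|
        ≤ Real.sqrt (∑ i, (x i)^2) * Real.sqrt (∑ i, ((fun i => s k * wh k i - w k i) i)^2) :=
          abs_dot_le _ _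
      _ = δ k := by
          rw [hx, Real.sqrt_one, one_mul,
            show (∑ i, ((fun i => s k * wh k i - w k i) i)^2)
              = ∑ i, (s k * wh k i - w k i)^2 from rfl, hδvec k]
  have hMa : ∀ l k, l ≠ k → |dot (wh l) (s k • w k)| ≤ K * Real.sqrt L := by
    intro l k hlk
    have key : s l * dot (wh l) (s k • w k)
        = dot (fun i => s l * wh l i - w l i) (s k • w k) + s k * dot (w l) (w k) := by
      unfold dot
      rw [Finset.mul_sum, Finset.mul_sum, ← Finset.sum_add_distrib]
      refine Finset.sum_congr rfl (fun i _ => ?_)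
      simp only [Pi.smul_apply, smul_eq_mul]
      ring
    have h1 : |dot (wh l) (s k • w k)| = |s l * dot (wh l) (s k • w k)| := by
      rw [abs_mul, hsabs l, one_mul]
    rw [h1, key]
    calc |dot (fun i => s l * wh l i - w l i) (s k • w k) + s k * dot (w l) (w k)|
        ≤ |dot (fun i => s l * wh l i - w l i) (s k • w k)| + |s k * dot (w l) (w k)| :=
          abs_add_le _ _
      _ ≤ δ l + Real.sqrt c₂ * Real.sqrt L := by
          refine add_le_add (hdotΔ l _ (hswsq k)) ?_
          rw [abs_mul, hsabs k, one_mul]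
          exact hww l k hlk
      _ ≤ Real.sqrt L + Real.sqrt c₂ * Real.sqrt L := by
          have h2 := hδle l; have h3 := hδL; linarith
      _ = (Real.sqrt c₂ + 1) * Real.sqrt L := by ring
      _ ≤ K * Real.sqrt L :=
          mul_le_mul_of_nonneg_right (by rw [hKdef]; linarith) (Real.sqrt_nonneg L)
  have hMb : ∀ l k, l ≠ k → |dot (wh l) (wh k)| ≤ K * Real.sqrt L := by
    intro l k hlk
    have hwlwh : |dot (w l) (wh k)| ≤ δ k + Real.sqrt c₂ * Real.sqrt L := by
      have key : s k * dot (w l) (wh k)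
          = dot (w l) (fun i => s k * wh k i - w k i) + dot (w l) (w k) := by
        unfold dot
        rw [Finset.mul_sum, ← Finset.sum_add_distrib]
        exact Finset.sum_congr rfl (fun i _ => by ring)
      have h1 : |dot (w l) (wh k)| = |s k * dot (w l) (wh k)| := by
        rw [abs_mul, hsabs k, one_mul]
      rw [h1, key]
      calc |dot (w l) (fun i => s k * wh k i - w k i) + dot (w l) (w k)|
          ≤ |dot (w l) (fun i => s k * wh k i - w k i)| + |dot (w l) (w k)| := abs_add_le _ _
        _ ≤ δ k + Real.sqrt c₂ * Real.sqrt L := add_le_add (hdotΔ' k _ (hw l)) (hww l k hlk)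
    have key2 : s l * dot (wh l) (wh k)
        = dot (fun i => s l * wh l i - w l i) (wh k) + dot (w l) (wh k) := by
      unfold dot
      rw [Finset.mul_sum, ← Finset.sum_add_distrib]
      exact Finset.sum_congr rfl (fun i _ => by ring)
    have h1 : |dot (wh l) (wh k)| = |s l * dot (wh l) (wh k)| := by
      rw [abs_mul, hsabs l, one_mul]
    rw [h1, key2]
    calc |dot (fun i => s l * wh l i - w l i) (wh k) + dot (w l) (wh k)|
        ≤ |dot (fun i => s l * wh l i - w l i) (wh k)| + |dot (w l) (wh k)| := abs_add_le _ _
      _ ≤ δ l + (δ k + Real.sqrt c₂ * Real.sqrt L) := add_le_add (hdotΔ l _ (hwh k)) hwlwh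
      _ ≤ Real.sqrt L + (Real.sqrt L + Real.sqrt c₂ * Real.sqrt L) := by
          have h2 := hδle l; have h3 := hδle k; have h4 := hδL; linarith
      _ = (Real.sqrt c₂ + 2) * Real.sqrt L := by ring
      _ ≤ K * Real.sqrt L :=
          mul_le_mul_of_nonneg_right (by rw [hKdef]; linarith) (Real.sqrt_nonneg L)
  -- row sums of the Gram matrix of wh
  have hR0 : (0:ℝ) ≤ (K+1) * m * Real.sqrt L := by positivity
  have hrow : ∀ l, ∑ k, |dot (wh l) (wh k)| ≤ (K+1) * m * Real.sqrt L := by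
    intro l
    rw [← Finset.add_sum_erase Finset.univ _ (Finset.mem_univ l)]
    have h1 : |dot (wh l) (wh l)| = 1 := by rw [hbll l]; norm_num
    have hKL0 : (0:ℝ) ≤ K * Real.sqrt L := by positivity
    have h2 : ∑ k ∈ Finset.univ.erase l, |dot (wh l) (wh k)| ≤ (m:ℝ) * (K * Real.sqrt L) := by
      calc ∑ k ∈ Finset.univ.erase l, |dot (wh l) (wh k)|
          ≤ ∑ k ∈ Finset.univ.erase l, K * Real.sqrt L :=
            Finset.sum_le_sum (fun k hk => hMb l k (Ne.symm (Finset.mem_erase.1 hk).1))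
        _ = ((Finset.univ.erase l).card : ℝ) * (K * Real.sqrt L) := by
            rw [Finset.sum_const, nsmul_eq_mul]
        _ ≤ (m:ℝ) * (K * Real.sqrt L) := by
            refine mul_le_mul_of_nonneg_right ?_ hKL0
            have hcard : (Finset.univ.erase l).card ≤ m := by
              calc (Finset.univ.erase l).card ≤ (Finset.univ : Finset (Fin m)).card :=
                    Finset.card_le_card (Finset.erase_subset _ _)
                _ = m := by rw [Finset.card_univ, Fintype.card_fin]
            exact_mod_cast hcard
    calc |dot (wh l) (wh l)| + ∑ k ∈ Finset.univ.erase l, |dot (wh l) (wh k)|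
        ≤ 1 + (m:ℝ) * (K * Real.sqrt L) := by rw [h1]; linarith
      _ ≤ (m:ℝ) * Real.sqrt L + K * ((m:ℝ) * Real.sqrt L) := by
          have h4 : (m:ℝ)*(K*Real.sqrt L) = K*((m:ℝ)*Real.sqrt L) := by ring
          linarith [hmsL, h4.le, h4.ge]
      _ = (K+1) * m * Real.sqrt L := by ring
  -- quadratic form bound
  have hquad : ∀ y : Fin m → ℝ, ∑ l, ∑ j, y l * y j * dot (wh l) (wh j)
      ≤ ((K+1) * m * Real.sqrt L) * ∑ l, (y l)^2 := by
    intro y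
    have hdc : ∀ l j, dot (wh l) (wh j) = dot (wh j) (wh l) := by
      intro l j; unfold dot; exact Finset.sum_congr rfl (fun i _ => mul_comm _ _)
    have step1 : ∀ l j, y l * y j * dot (wh l) (wh j)
        ≤ |dot (wh l) (wh j)| * ((y l)^2/2) + |dot (wh l) (wh j)| * ((y j)^2/2) := fun l j =>
      aux_step1 (y l) (y j) (dot (wh l) (wh j))
    calc ∑ l, ∑ j, y l * y j * dot (wh l) (wh j)
        ≤ ∑ l, ∑ j, (|dot (wh l) (wh j)| * ((y l)^2/2) + |dot (wh l) (wh j)| * ((y j)^2/2)) :=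
          Finset.sum_le_sum (fun l _ => Finset.sum_le_sum (fun j _ => step1 l j))
      _ = (∑ l, ∑ j, |dot (wh l) (wh j)| * ((y l)^2/2))
          + ∑ l, ∑ j, |dot (wh l) (wh j)| * ((y j)^2/2) := by
          rw [← Finset.sum_add_distrib]
          exact Finset.sum_congr rfl (fun l _ => Finset.sum_add_distrib)
      _ ≤ ((K+1) * m * Real.sqrt L) * (∑ l, (y l)^2/2)
          + ((K+1) * m * Real.sqrt L) * (∑ j, (y j)^2/2) := by
          refine add_le_add ?_ ?_
          · calc ∑ l, ∑ j, |dot (wh l) (wh j)| * ((y l)^2/2)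
                = ∑ l, (∑ j, |dot (wh l) (wh j)|) * ((y l)^2/2) :=
                  Finset.sum_congr rfl (fun l _ => (Finset.sum_mul _ _ _).symm)
              _ ≤ ∑ l, ((K+1) * m * Real.sqrt L) * ((y l)^2/2) :=
                  Finset.sum_le_sum (fun l _ =>
                    mul_le_mul_of_nonneg_right (hrow l) (by positivity))
              _ = ((K+1) * m * Real.sqrt L) * (∑ l, (y l)^2/2) := by rw [Finset.mul_sum]
          · calc ∑ l, ∑ j, |dot (wh l) (wh j)| * ((y j)^2/2)
                = ∑ j, ∑ l, |dot (wh l) (wh j)| * ((y j)^2/2) := Finset.sum_comm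
              _ = ∑ j, (∑ l, |dot (wh j) (wh l)|) * ((y j)^2/2) := by
                  refine Finset.sum_congr rfl (fun j _ => ?_)
                  rw [← Finset.sum_mul]
                  congr 1
                  exact Finset.sum_congr rfl (fun l _ => by rw [hdc l j])
              _ ≤ ∑ j, ((K+1) * m * Real.sqrt L) * ((y j)^2/2) :=
                  Finset.sum_le_sum (fun j _ =>
                    mul_le_mul_of_nonneg_right (hrow j) (by positivity))
              _ = ((K+1) * m * Real.sqrt L) * (∑ j, (y j)^2/2) := by rw [Finset.mul_sum]
      _ = ((K+1) * m * Real.sqrt L) * ∑ l, (y l)^2 := by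
          rw [← mul_add]
          congr 1
          rw [← Finset.sum_add_distrib]
          exact Finset.sum_congr rfl (fun l _ => by ring)
  -- the key per-column bound
  have hT : ∀ k, ∑ l, (dot (wh l) (fun i => s k * w k i - wh k i))^2
      ≤ ((K+1) * m * Real.sqrt L) * (δ k)^2 := by
    intro k
    set y : Fin m → ℝ := fun l => dot (wh l) (fun i => s k * w k i - wh k i) with hydef
    set T : ℝ := ∑ l, (y l)^2 with hTdef
    have hT0 : 0 ≤ T := Finset.sum_nonneg (fun l _ => sq_nonneg _)
    by_cases hTz : T = 0
    · rw [hTz]; positivity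
    · have hTpos : 0 < T := lt_of_le_of_ne hT0 (Ne.symm hTz)
      have hΔk : ∑ i, (s k * w k i - wh k i)^2 = (δ k)^2 := by
        rw [hδsq k]
        refine Finset.sum_congr rfl (fun i _ => ?_)
        linear_combination (w k i ^ 2 - wh k i ^ 2) * hs2 k
      have hzbound : ∑ i, (∑ l, y l * wh l i)^2 ≤ ((K+1) * m * Real.sqrt L) * T := by
        have expand : ∑ i, (∑ l, y l * wh l i)^2 = ∑ l, ∑ j, y l * y j * dot (wh l) (wh j) := by
          calc ∑ i, (∑ l, y l * wh l i)^2
              = ∑ i, ∑ l, ∑ j, (y l * wh l i) * (y j * wh j i) := by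
                refine Finset.sum_congr rfl (fun i _ => ?_)
                rw [sq, Finset.sum_mul_sum]
            _ = ∑ l, ∑ i, ∑ j, (y l * wh l i) * (y j * wh j i) := Finset.sum_comm
            _ = ∑ l, ∑ j, ∑ i, (y l * wh l i) * (y j * wh j i) :=
                Finset.sum_congr rfl (fun l _ => Finset.sum_comm)
            _ = ∑ l, ∑ j, y l * y j * dot (wh l) (wh j) := by
                refine Finset.sum_congr rfl (fun l _ => Finset.sum_congr rfl (fun j _ => ?_))
                unfold dot
                rw [Finset.mul_sum]
                exact Finset.sum_congr rfl (fun i _ => by ring)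
        rw [expand]; exact hquad y
      have hTdot : T = dot (fun i => s k * w k i - wh k i) (fun i => ∑ l, y l * wh l i) := by
        unfold dot
        calc T = ∑ l, y l * y l := by
              rw [hTdef]; exact Finset.sum_congr rfl (fun l _ => pow_two (y l))
          _ = ∑ l, ∑ i, y l * (wh l i * (s k * w k i - wh k i)) := by
              refine Finset.sum_congr rfl (fun l _ => ?_)
              rw [← Finset.mul_sum]
              congr 1
          _ = ∑ i, ∑ l, y l * (wh l i * (s k * w k i - wh k i)) := Finset.sum_comm
          _ = ∑ i, (s k * w k i - wh k i) * (∑ l, y l * wh l i) := by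
              refine Finset.sum_congr rfl (fun i _ => ?_)
              rw [Finset.mul_sum]
              exact Finset.sum_congr rfl (fun l _ => by ring)
      have hbound : T ≤ δ k * Real.sqrt (((K+1) * m * Real.sqrt L) * T) := by
        calc T = dot (fun i => s k * w k i - wh k i) (fun i => ∑ l, y l * wh l i) := hTdot
          _ ≤ |dot (fun i => s k * w k i - wh k i) (fun i => ∑ l, y l * wh l i)| := le_abs_self _
          _ ≤ Real.sqrt (∑ i, (s k * w k i - wh k i)^2)
              * Real.sqrt (∑ i, (∑ l, y l * wh l i)^2) := abs_dot_le _ _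
          _ = δ k * Real.sqrt (∑ i, (∑ l, y l * wh l i)^2) := by
              rw [hΔk, Real.sqrt_sq (hδnn k)]
          _ ≤ δ k * Real.sqrt (((K+1) * m * Real.sqrt L) * T) :=
              mul_le_mul_of_nonneg_left (Real.sqrt_le_sqrt hzbound) (hδnn k)
      have hsT : 0 < Real.sqrt T := Real.sqrt_pos.mpr hTpos
      have h5 : Real.sqrt T * Real.sqrt T
          ≤ (δ k * Real.sqrt ((K+1) * m * Real.sqrt L)) * Real.sqrt T := by
        rw [Real.mul_self_sqrt hT0]
        calc T ≤ δ k * Real.sqrt (((K+1) * m * Real.sqrt L) * T) := hbound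
          _ = (δ k * Real.sqrt ((K+1) * m * Real.sqrt L)) * Real.sqrt T := by
              rw [Real.sqrt_mul hR0]; ring
      have h6 : Real.sqrt T ≤ δ k * Real.sqrt ((K+1) * m * Real.sqrt L) :=
        le_of_mul_le_mul_right h5 hsT
      calc T = Real.sqrt T * Real.sqrt T := (Real.mul_self_sqrt hT0).symm
        _ ≤ (δ k * Real.sqrt ((K+1) * m * Real.sqrt L))
            * (δ k * Real.sqrt ((K+1) * m * Real.sqrt L)) :=
            mul_le_mul h6 h6 (Real.sqrt_nonneg T) (mul_nonneg (hδnn k) (Real.sqrt_nonneg _))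
        _ = (δ k)^2 * (Real.sqrt ((K+1) * m * Real.sqrt L)
            * Real.sqrt ((K+1) * m * Real.sqrt L)) := by ring
        _ = (δ k)^2 * ((K+1) * m * Real.sqrt L) := by rw [Real.mul_self_sqrt hR0]
        _ = ((K+1) * m * Real.sqrt L) * (δ k)^2 := mul_comm _ _
  have hS : ∑ k, ∑ l, (dot (wh l) (fun i => s k * w k i - wh k i))^2
      ≤ ((K+1) * m * Real.sqrt L) * (m * δmax^2) := by
    calc ∑ k, ∑ l, (dot (wh l) (fun i => s k * w k i - wh k i))^2
        ≤ ∑ _k : Fin m, ((K+1) * m * Real.sqrt L) * δmax^2 := by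
          refine Finset.sum_le_sum (fun k _ => le_trans (hT k) ?_)
          exact mul_le_mul_of_nonneg_left (pow_le_pow_left₀ (hδnn k) (hδle k) 2) hR0
      _ = (m:ℝ) * (((K+1) * m * Real.sqrt L) * δmax^2) := by
          rw [Finset.sum_const, Finset.card_univ, Fintype.card_fin, nsmul_eq_mul]
      _ = ((K+1) * m * Real.sqrt L) * (m * δmax^2) := by ring
  -- difference of dots
  have hablk : ∀ l k, dot (wh l) (s k • w k) - dot (wh l) (wh k)
      = dot (wh l) (fun i => s k * w k i - wh k i) := by
    intro l k
    unfold dot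
    rw [← Finset.sum_sub_distrib]
    refine Finset.sum_congr rfl (fun i _ => ?_)
    simp only [Pi.smul_apply, smul_eq_mul]
    ring
  have hdiagA : ∀ k, dot (wh k) (s k • w k) = 1 - (δ k)^2/2 := by
    intro k
    have h := hδsq k
    have hd : dot (wh k) (s k • w k) = ∑ i, wh k i * (s k * w k i) := by
      unfold dot
      exact Finset.sum_congr rfl (fun i _ => by simp [Pi.smul_apply, smul_eq_mul])
    have hexp : ∑ i, (s k * wh k i - w k i)^2
        = (s k * s k) * (∑ i, (wh k i)^2) + (∑ i, (w k i)^2)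
          - 2 * ∑ i, wh k i * (s k * w k i) := by
      rw [Finset.mul_sum, Finset.mul_sum]
      rw [← Finset.sum_add_distrib, ← Finset.sum_sub_distrib]
      exact Finset.sum_congr rfl (fun i _ => by ring)
    rw [hd]
    rw [hexp, hs2 k, hwh k, hw k] at h
    linarith
  -- matrices
  set E : Matrix (Fin m) (Fin m) ℝ :=
    (Matrix.of fun l k => (dot (wh l) (s k • w k)) ^ n) -
      Matrix.of fun l k => (dot (wh l) (wh k)) ^ n with hEdef
  set Ed : Matrix (Fin m) (Fin m) ℝ :=
    Matrix.diagonal (fun k => (dot (wh k) (s k • w k))^n - 1) with hEddef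
  have hEentry : ∀ l k, E l k = (dot (wh l) (s k • w k))^n - (dot (wh l) (wh k))^n := by
    intro l k
    rw [hEdef]
    simp [Matrix.sub_apply, Matrix.of_apply]
  have htri : opNorm E ≤ opNorm Ed + opNorm (E - Ed) := by
    have h : E = Ed + (E - Ed) := by abel
    conv_lhs => rw [h]
    unfold opNorm
    rw [map_add]
    exact norm_add_le _ _
  -- diagonal bound
  have hEdB : opNorm Ed ≤ (3/2) * δmax^2 := by
    rw [hEddef]
    apply opNorm_diagonal_le _ _ (by positivity)
    intro k
    have h1 := habs_a k k
    have h2 := hdiagA k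
    have h3 : (δ k)^2 ≤ δmax^2 := pow_le_pow_left₀ (hδnn k) (hδle k) 2
    rcases hn with rfl | rfl
    · exact aux_diag2 h1 h2 h3 (sq_nonneg _)
    · exact aux_diag3 h1 h2 h3 (sq_nonneg _)
  have hLm0 : (0:ℝ) ≤ Lm := by linarith
  have hexp54 : Real.sqrt (D:ℝ) / (C * m * Real.sqrt Lm) ≤ (m:ℝ) * L ^ ((5:ℝ)/4) := by
    have hsLm : (0:ℝ) < Real.sqrt Lm := Real.sqrt_pos.mpr (by linarith)
    have hden : (0:ℝ) < C * m * Real.sqrt Lm := by positivity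
    rw [div_le_iff₀ hden]
    have hLval : L ^ ((5:ℝ)/4) = Lm ^ ((5:ℝ)/4) / (D:ℝ) ^ ((5:ℝ)/4) := by
      rw [hLdef, Real.div_rpow hLm0 hDpos.le]
    rw [hLval]
    have hD54 : (0:ℝ) < ((D:ℝ)) ^ ((5:ℝ)/4) := Real.rpow_pos_of_pos hDpos _
    rw [show (m:ℝ) * (Lm ^ ((5:ℝ)/4) / (D:ℝ) ^ ((5:ℝ)/4)) * (C * m * Real.sqrt Lm)
        = (C * (m:ℝ)^2 * Real.sqrt Lm * Lm ^ ((5:ℝ)/4)) / (D:ℝ) ^ ((5:ℝ)/4) from by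
        field_simp]
    rw [le_div_iff₀ hD54]
    have e1 : Real.sqrt (D:ℝ) * ((D:ℝ)) ^ ((5:ℝ)/4) = ((D:ℝ)) ^ ((7:ℝ)/4) := by
      rw [Real.sqrt_eq_rpow, ← Real.rpow_add hDpos]
      norm_num
    rw [e1]
    have e2 : ((D:ℝ)) ^ ((7:ℝ)/4) ≤ ((m:ℝ)) ^ ((7:ℝ)/4) :=
      Real.rpow_le_rpow hDpos.le hmD' (by norm_num)
    have e3 : ((m:ℝ)) ^ ((7:ℝ)/4) ≤ ((m:ℝ)) ^ ((2:ℝ)) :=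
      Real.rpow_le_rpow_of_exponent_le (by linarith) (by norm_num)
    have e4 : ((m:ℝ)) ^ ((2:ℝ)) = (m:ℝ)^2 := Real.rpow_two (m:ℝ)
    have e5 : (1:ℝ) ≤ Real.sqrt Lm := by
      rw [show (1:ℝ) = Real.sqrt 1 by simp]
      exact Real.sqrt_le_sqrt hLm1
    have e6 : (1:ℝ) ≤ Lm ^ ((5:ℝ)/4) := by
      calc (1:ℝ) = Lm ^ (0:ℝ) := (Real.rpow_zero Lm).symm
        _ ≤ Lm ^ ((5:ℝ)/4) := Real.rpow_le_rpow_of_exponent_le hLm1 (by norm_num)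
    calc ((D:ℝ)) ^ ((7:ℝ)/4) ≤ ((m:ℝ)) ^ ((7:ℝ)/4) := e2
      _ ≤ ((m:ℝ)) ^ ((2:ℝ)) := e3
      _ = (m:ℝ)^2 := e4
      _ ≤ C * (m:ℝ)^2 * Real.sqrt Lm * Lm ^ ((5:ℝ)/4) := aux_ge hC1 e5 e6 (sq_nonneg _)
  have hEd_final : opNorm Ed ≤ (3/2) * ((m:ℝ) * L ^ ((2*(n:ℝ)-1)/4) * δmax) := by
    refine le_trans hEdB ?_
    have hexpe : (m:ℝ) * L ^ ((5:ℝ)/4) ≤ (m:ℝ) * L ^ ((2*(n:ℝ)-1)/4) := by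
      refine mul_le_mul_of_nonneg_left ?_ hmpos.le
      refine Real.rpow_le_rpow_of_exponent_ge hLpos hL1 ?_
      rcases hn with rfl | rfl <;> norm_num
    have hkey : δmax ≤ (m:ℝ) * L ^ ((2*(n:ℝ)-1)/4) :=
      le_trans hδsmall (le_trans hexp54 hexpe)
    have h := mul_le_mul_of_nonneg_right hkey hδmax0
    calc (3/2) * δmax^2 = (3/2)*(δmax*δmax) := by ring
      _ ≤ (3/2)*(((m:ℝ) * L ^ ((2*(n:ℝ)-1)/4))*δmax) := by linarith
      _ = (3/2) * ((m:ℝ) * L ^ ((2*(n:ℝ)-1)/4) * δmax) := by ring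
  -- off-diagonal entries
  have hEo_diag : ∀ k, (E - Ed) k k = 0 := by
    intro k
    rw [Matrix.sub_apply, hEentry k k, hEddef, Matrix.diagonal_apply_eq, hbll k, one_pow]
    ring
  have hEo_off : ∀ l k, l ≠ k → (E - Ed) l k
      = (dot (wh l) (s k • w k))^n - (dot (wh l) (wh k))^n := by
    intro l k hlk
    rw [Matrix.sub_apply, hEentry l k, hEddef, Matrix.diagonal_apply_ne _ hlk, sub_zero]
  have hEo_entry : ∀ l k, ((E - Ed) l k)^2
      ≤ (3 * (K * Real.sqrt L)^(n-1))^2 * (dot (wh l) (fun i => s k * w k i - wh k i))^2 := by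
    intro l k
    by_cases hlk : l = k
    · rw [hlk, hEo_diag k]
      rw [show ((0:ℝ))^2 = 0 from by norm_num]
      positivity
    · rw [hEo_off l k hlk]
      have hA := hMa l k hlk
      have hB := hMb l k hlk
      have hAB := hablk l k
      rw [← hAB]
      rcases hn with rfl | rfl
      · simp only [show (2-1:ℕ) = 1 from rfl]
        exact aux_pow2 hA hB
      · simp only [show (3-1:ℕ) = 2 from rfl]
        exact aux_pow3 hA hB
  have hF2 : ∑ l, ∑ k, ((E - Ed) l k)^2
      ≤ (3*(K*Real.sqrt L)^(n-1))^2 * (((K+1) * m * Real.sqrt L) * (m * δmax^2)) := by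
    calc ∑ l, ∑ k, ((E - Ed) l k)^2
        ≤ ∑ l, ∑ k, (3*(K*Real.sqrt L)^(n-1))^2
            * (dot (wh l) (fun i => s k * w k i - wh k i))^2 :=
          Finset.sum_le_sum (fun l _ => Finset.sum_le_sum (fun k _ => hEo_entry l k))
      _ = (3*(K*Real.sqrt L)^(n-1))^2
          * ∑ l, ∑ k, (dot (wh l) (fun i => s k * w k i - wh k i))^2 := by
          rw [Finset.mul_sum]
          exact Finset.sum_congr rfl (fun l _ => by rw [Finset.mul_sum])
      _ = (3*(K*Real.sqrt L)^(n-1))^2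
          * ∑ k, ∑ l, (dot (wh l) (fun i => s k * w k i - wh k i))^2 := by
          rw [Finset.sum_comm]
      _ ≤ _ := mul_le_mul_of_nonneg_left hS (sq_nonneg _)
  have hEo_final : opNorm (E - Ed) ≤ (3*K^2*(K+1)) * ((m:ℝ) * L ^ ((2*(n:ℝ)-1)/4) * δmax) := by
    refine le_trans (opNorm_le_frobenius (E - Ed)) (le_trans (Real.sqrt_le_sqrt hF2) ?_)
    have hLe4 : (0:ℝ) ≤ L ^ ((2*(n:ℝ)-1)/4) := Real.rpow_nonneg hLpos.le _
    have hRHS0 : 0 ≤ (3*K^2*(K+1)) * ((m:ℝ) * L ^ ((2*(n:ℝ)-1)/4) * δmax) := by positivity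
    rw [show (3*K^2*(K+1)) * ((m:ℝ) * L ^ ((2*(n:ℝ)-1)/4) * δmax)
        = Real.sqrt (((3*K^2*(K+1)) * ((m:ℝ) * L ^ ((2*(n:ℝ)-1)/4) * δmax))^2) from
        (Real.sqrt_sq hRHS0).symm]
    apply Real.sqrt_le_sqrt
    have hsq2 : Real.sqrt L * Real.sqrt L = L := Real.mul_self_sqrt hLpos.le
    have hcoef : 9*K^2*(K+1) ≤ 9*K^4*(K+1)^2 := aux_coef1 hK1
    rcases hn with rfl | rfl
    · have hee : ((2*((2:ℕ):ℝ)-1)/4) = (3:ℝ)/4 := by norm_num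
      rw [hee]
      have hLe : (L ^ ((3:ℝ)/4))^2 = L * Real.sqrt L := by
        rw [← Real.rpow_natCast (L ^ ((3:ℝ)/4)) 2, ← Real.rpow_mul hLpos.le]
        rw [Real.sqrt_eq_rpow, show (3:ℝ)/4 * ((2:ℕ):ℝ) = 1 + 1/(2:ℝ) by push_cast; norm_num]
        rw [Real.rpow_add hLpos, Real.rpow_one]
      have hX0 : (0:ℝ) ≤ (m:ℝ)^2 * (L * Real.sqrt L) * δmax^2 := by positivity
      calc (3*(K*Real.sqrt L)^(2-1))^2 * (((K+1) * m * Real.sqrt L) * (m * δmax^2))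
          = (9*K^2*(K+1)) * ((m:ℝ)^2 * (L * Real.sqrt L) * δmax^2) := by
            simp only [show (2-1:ℕ) = 1 from rfl, pow_one]
            rw [show (3*(K*Real.sqrt L))^2 = 9*K^2*(Real.sqrt L*Real.sqrt L) from by ring, hsq2]
            ring
        _ ≤ (9*K^4*(K+1)^2) * ((m:ℝ)^2 * (L * Real.sqrt L) * δmax^2) :=
            mul_le_mul_of_nonneg_right hcoef hX0
        _ = ((3*K^2*(K+1)) * ((m:ℝ) * L ^ ((3:ℝ)/4) * δmax))^2 := by
            rw [show ((3*K^2*(K+1)) * ((m:ℝ) * L ^ ((3:ℝ)/4) * δmax))^2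
                = 9*K^4*(K+1)^2 * ((m:ℝ)^2 * ((L^((3:ℝ)/4))^2) * δmax^2) from by ring, hLe]
    · have hee : ((2*((3:ℕ):ℝ)-1)/4) = (5:ℝ)/4 := by norm_num
      rw [hee]
      have hLe : (L ^ ((5:ℝ)/4))^2 = L^2 * Real.sqrt L := by
        rw [← Real.rpow_natCast (L ^ ((5:ℝ)/4)) 2, ← Real.rpow_mul hLpos.le]
        rw [Real.sqrt_eq_rpow, show (5:ℝ)/4 * ((2:ℕ):ℝ) = ((2:ℕ):ℝ) + 1/(2:ℝ) by push_cast; norm_num]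
        rw [Real.rpow_add hLpos, Real.rpow_natCast]
      have hX0 : (0:ℝ) ≤ (m:ℝ)^2 * (L^2 * Real.sqrt L) * δmax^2 := by positivity
      calc (3*(K*Real.sqrt L)^(3-1))^2 * (((K+1) * m * Real.sqrt L) * (m * δmax^2))
          = (9*K^4*(K+1)) * ((m:ℝ)^2 * (L^2 * Real.sqrt L) * δmax^2) := by
            simp only [show (3-1:ℕ) = 2 from rfl]
            rw [show (3*(K*Real.sqrt L)^2)^2
                = 9*K^4*((Real.sqrt L*Real.sqrt L)*(Real.sqrt L*Real.sqrt L)) from by ring, hsq2]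
            ring
        _ ≤ (9*K^4*(K+1)^2) * ((m:ℝ)^2 * (L^2 * Real.sqrt L) * δmax^2) := by
            exact mul_le_mul_of_nonneg_right (aux_coef2 hK1) hX0
        _ = ((3*K^2*(K+1)) * ((m:ℝ) * L ^ ((5:ℝ)/4) * δmax))^2 := by
            rw [show ((3*K^2*(K+1)) * ((m:ℝ) * L ^ ((5:ℝ)/4) * δmax))^2
                = 9*K^4*(K+1)^2 * ((m:ℝ)^2 * ((L^((5:ℝ)/4))^2) * δmax^2) from by ring, hLe]
  calc opNorm E ≤ opNorm Ed + opNorm (E - Ed) := htri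
    _ ≤ (3/2) * ((m:ℝ) * L ^ ((2*(n:ℝ)-1)/4) * δmax)
        + (3*K^2*(K+1)) * ((m:ℝ) * L ^ ((2*(n:ℝ)-1)/4) * δmax) := add_le_add hEd_final hEo_final
    _ = C * (m:ℝ) * L ^ ((2*(n:ℝ)-1)/4) * δmax := by rw [hCdef]; ring
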